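/- arXiv:1507.07370 — 2 statements merged into one kernel-verified Lean document; each statement's English description precedes it below -/
import Mathlib

section
/- Let G_• be a filtration of length d on a nilpotent finite-dimensional real Lie group G, and let Γ ≤ G be a discrete subgroup with G/Γ compact such that G_• is Γ-rational. Let k ≥ 1 and let (ḡ_ω)_{ω ∈ {0,1}^k \ {1^k}} be a family of points of G/Γ such that for every codimension-one face F_i = {ω ∈ {0,1}^k : ω_i = 0} (i = 1,…,k), the restricted cube (ḡ_ω)_{ω ∈ F_i}, identified with a {0,1}^{k−1}-indexed cube, lies in the image of HK^{k−1}(G_•) in (G/Γ)^{{0,1}^{k−1}}. Then there exists ḡ_{1^k} ∈ G/Γ such that the completed cube (ḡ_ω)_{ω ∈ {0,1}^k} lies in the image of HK^k(G_•) in (G/Γ)^{{0,1}^k}. -/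
/-- Auxiliary definition of polynomial maps `𝓕∅ → G` with respect to a prefiltration
`G_•` (given as a sequence of subgroups of an ambient group), with recursion depth `n`:
at depth `0` the prefiltration must be trivial and the map constantly `1`; at depth
`n + 1` the map takes values in `G_0` and all its discrete derivatives
`D_β f (α) = f(α)⁻¹ · f(α ∪ β)` (for `β` non-empty and `α` disjoint from `β`) agree with
maps that are polynomial of depth `n` with respect to the shifted prefiltration `G_{•+1}`. -/
def PolyAux {G : Type*} [Group G] : ℕ → (ℕ → Subgroup G) → (Finset ℕ → G) → Prop
  | 0, Gs, f => Gs 0 = ⊥ ∧ ∀ α : Finset ℕ, f α = 1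
  | n + 1, Gs, f => (∀ α : Finset ℕ, f α ∈ Gs 0) ∧
      ∀ β : Finset ℕ, β.Nonempty →
        ∃ Df : Finset ℕ → G, PolyAux n (fun i => Gs (i + 1)) Df ∧
          ∀ α : Finset ℕ, Disjoint α β → Df α = (f α)⁻¹ * f (α ∪ β)

/-- `f ∈ poly(𝓕∅ → G_•)`: `f` is polynomial with respect to the (terminating)
prefiltration `G_•`. -/
def IsPolySeq {G : Type*} [Group G] (Gs : ℕ → Subgroup G) (f : Finset ℕ → G) : Prop :=
  ∃ n : ℕ, PolyAux n Gs f

/-- `f ∈ poly(𝓕∅ → G_•/Γ)`: `f = π ∘ g` for some `g ∈ poly(𝓕∅ → G_•)`, where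
`π : G → G/Γ` is the quotient map. -/
def IsPolyQuot {G : Type*} [Group G] (Gs : ℕ → Subgroup G) (Γ : Subgroup G)
    (f : Finset ℕ → G ⧸ Γ) : Prop :=
  ∃ g : Finset ℕ → G, IsPolySeq Gs g ∧ ∀ α : Finset ℕ, f α = QuotientGroup.mk (g α)

/-- The number of coordinates of `ω ∈ {0,1}^k` equal to `1`. -/
def cubeWeight {k : ℕ} (ω : Fin k → Bool) : ℕ :=
  (Finset.univ.filter fun i => ω i = true).card

/-- The Host–Kra cube group `HK^k(G_•)`: the subgroup of `G^{{0,1}^k}` generated by the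
upper-face elements `g^{[ω]}` (equal to `g` on `{σ : σ ≥ ω}` and `1` elsewhere) with
`g ∈ G_{|ω|}`. -/
def HKGroup {G : Type*} [Group G] (k : ℕ) (Gs : ℕ → Subgroup G) :
    Subgroup ((Fin k → Bool) → G) :=
  Subgroup.closure {x | ∃ (ω : Fin k → Bool) (g : G), g ∈ Gs (cubeWeight ω) ∧
    x = fun σ => if ∀ i, ω i ≤ σ i then g else 1}

/-- Parallelepipeds in `𝓕∅`: families `(α_ω)_{ω ∈ {0,1}^k}` with
`α_ω = α_0 ∪ ⋃_{i : ω_i = 1} α_i` for pairwise disjoint finite sets `α_0, α_1, …, α_k`. -/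
def IsParallelepiped (k : ℕ) (A : (Fin k → Bool) → Finset ℕ) : Prop :=
  ∃ (a : Finset ℕ) (b : Fin k → Finset ℕ),
    (∀ i, Disjoint a (b i)) ∧ (Pairwise fun i j => Disjoint (b i) (b j)) ∧
    ∀ ω : Fin k → Bool, A ω = a ∪ (Finset.univ.filter fun i => ω i = true).biUnion b

namespace S7

variable {G : Type*} [Group G] {k : ℕ}

def gen (ω : Fin k → Bool) (g : G) : (Fin k → Bool) → G :=
  fun σ => if ∀ i, ω i ≤ σ i then g else 1

lemma gen_mem {Gs : ℕ → Subgroup G} (ω : Fin k → Bool) {g : G}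
    (hg : g ∈ Gs (cubeWeight ω)) : gen ω g ∈ HKGroup k Gs :=
  Subgroup.subset_closure ⟨ω, g, hg, rfl⟩

lemma gen_inv (ω : Fin k → Bool) (g : G) : (gen ω g)⁻¹ = gen ω g⁻¹ := by
  funext σ; by_cases h : ∀ i, ω i ≤ σ i <;> simp [gen, h]

lemma bool_sup_le {a b c : Bool} : (a || b) ≤ c ↔ a ≤ c ∧ b ≤ c := by
  revert a b c; decide

lemma gen_conj (τ ρ : Fin k → Bool) (h g : G) :
    gen τ h * gen ρ g * (gen τ h)⁻¹ =
      gen (fun i => ρ i || τ i) (h * g * h⁻¹ * g⁻¹) * gen ρ g := by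
  funext σ
  have hsup : (∀ i, (ρ i || τ i) ≤ σ i) ↔ (∀ i, ρ i ≤ σ i) ∧ (∀ i, τ i ≤ σ i) := by
    simp only [bool_sup_le, forall_and]
  by_cases hτ : ∀ i, τ i ≤ σ i <;> by_cases hρ : ∀ i, ρ i ≤ σ i <;>
    simp [gen, hτ, hρ, hsup, Pi.mul_apply, Pi.inv_apply]

lemma cubeWeight_sup_le (ρ τ : Fin k → Bool) :
    cubeWeight (fun i => ρ i || τ i) ≤ cubeWeight ρ + cubeWeight τ := by
  refine le_trans (Finset.card_le_card ?_) (Finset.card_union_le _ _)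
  intro i hi
  simp only [Finset.mem_filter, Finset.mem_union, Finset.mem_univ, true_and,
    Bool.or_eq_true] at *
  tauto

lemma mem_HK_iff {Gs : ℕ → Subgroup G} {x : (Fin k → Bool) → G} :
    x ∈ HKGroup k Gs ↔ x ∈ Subgroup.closure
      {y | ∃ (ω : Fin k → Bool) (g : G), g ∈ Gs (cubeWeight ω) ∧ y = gen ω g} := Iff.rfl

/-- Extension (doubling) along the last coordinate. -/
def XHom (k : ℕ) : ((Fin k → Bool) → G) →* ((Fin (k + 1) → Bool) → G) :=
  MonoidHom.mk' (fun c σ => c (Fin.init σ)) (fun _ _ => rfl)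

/-- Embedding on the upper face of the last coordinate. -/
def UHom (k : ℕ) : ((Fin k → Bool) → G) →* ((Fin (k + 1) → Bool) → G) :=
  MonoidHom.mk' (fun u σ => if σ (Fin.last k) = true then u (Fin.init σ) else 1)
    (fun x y => by
      funext σ; by_cases h : σ (Fin.last k) = true <;> simp [h])

/-- Restriction to a codimension-one face. -/
def RHom (i : Fin (k + 1)) (b : Bool) : ((Fin (k + 1) → Bool) → G) →* ((Fin k → Bool) → G) :=
  MonoidHom.mk' (fun c τ => c (i.insertNth b τ)) (fun _ _ => rfl)

@[simp] lemma XHom_apply (c : (Fin k → Bool) → G) (σ : Fin (k + 1) → Bool) :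
    XHom k c σ = c (Fin.init σ) := rfl

@[simp] lemma RHom_apply (i : Fin (k + 1)) (b : Bool) (c : (Fin (k + 1) → Bool) → G)
    (τ : Fin k → Bool) : RHom i b c τ = c (i.insertNth b τ) := rfl

lemma UHom_apply (u : (Fin k → Bool) → G) (σ : Fin (k + 1) → Bool) :
    UHom k u σ = if σ (Fin.last k) = true then u (Fin.init σ) else 1 := rfl

@[simp] lemma XHom_apply_snoc (c : (Fin k → Bool) → G) (τ : Fin k → Bool) (b : Bool) :
    XHom k c (Fin.snoc τ b) = c τ := by simp [XHom_apply]

@[simp] lemma UHom_apply_snoc_true (u : (Fin k → Bool) → G) (τ : Fin k → Bool) :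
    UHom k u (Fin.snoc τ true) = u τ := by simp [UHom_apply]

@[simp] lemma UHom_apply_snoc_false (u : (Fin k → Bool) → G) (τ : Fin k → Bool) :
    UHom k u (Fin.snoc τ false) = 1 := by simp [UHom_apply]

@[simp] lemma not_true_le_false : ¬ ((true : Bool) ≤ false) := by decide

lemma forall_snoc_le {ω : Fin k → Bool} {b : Bool} {σ : Fin (k + 1) → Bool} :
    (∀ j, (Fin.snoc ω b : Fin (k + 1) → Bool) j ≤ σ j) ↔
      (b ≤ σ (Fin.last k) ∧ ∀ l, ω l ≤ Fin.init σ l) := by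
  rw [Fin.forall_iff_succAbove (Fin.last k)]
  simp [Fin.succAbove_last, Fin.init]

lemma X_gen (ω : Fin k → Bool) (g : G) : XHom k (gen ω g) = gen (Fin.snoc ω false) g := by
  funext σ
  show gen ω g (Fin.init σ) = gen (Fin.snoc ω false) g σ
  simp [gen, forall_snoc_le]

lemma U_gen (ω : Fin k → Bool) (g : G) : UHom k (gen ω g) = gen (Fin.snoc ω true) g := by
  funext σ
  show (if σ (Fin.last k) = true then gen ω g (Fin.init σ) else 1) = gen (Fin.snoc ω true) g σ
  by_cases h : σ (Fin.last k) = true <;> simp [gen, forall_snoc_le, h]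

lemma R_gen (i : Fin (k + 1)) (b : Bool) (ω : Fin (k + 1) → Bool) (g : G) :
    RHom i b (gen ω g) = if ω i ≤ b then gen (i.removeNth ω) g else 1 := by
  have hcond : ∀ τ : Fin k → Bool,
      (∀ j, ω j ≤ (i.insertNth b τ : Fin (k + 1) → Bool) j) ↔ (ω i ≤ b ∧ ∀ l, ω (i.succAbove l) ≤ τ l) := by
    intro τ
    rw [Fin.forall_iff_succAbove i]
    simp
  by_cases hb : ω i ≤ b
  · rw [if_pos hb]
    funext τ
    show gen ω g (i.insertNth b τ) = gen (i.removeNth ω) g τ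
    unfold gen
    rw [if_congr ((hcond τ).trans (and_iff_right hb)) rfl rfl]
    rfl
  · rw [if_neg hb]
    funext τ
    show gen ω g (i.insertNth b τ) = (1 : (Fin k → Bool) → G) τ
    rw [Pi.one_apply]
    unfold gen
    rw [if_neg]
    intro hj
    exact hb ((hcond τ).mp hj).1

lemma cubeWeight_snoc (ω : Fin k → Bool) (b : Bool) :
    cubeWeight (Fin.snoc ω b) = cubeWeight ω + (if b then 1 else 0) := by
  unfold cubeWeight
  rw [Finset.card_filter, Finset.card_filter, Fin.sum_univ_castSucc]
  simp

lemma cubeWeight_removeNth_le (i : Fin (k + 1)) (ω : Fin (k + 1) → Bool) :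
    cubeWeight (i.removeNth ω) ≤ cubeWeight ω := by
  refine Finset.card_le_card_of_injOn i.succAbove ?_
    (Fin.succAbove_right_injective.injOn)
  intro l hl
  rw [Finset.mem_coe, Finset.mem_filter] at hl ⊢
  exact ⟨Finset.mem_univ _, hl.2⟩

lemma X_mem {Gs : ℕ → Subgroup G} {c : (Fin k → Bool) → G} (hc : c ∈ HKGroup k Gs) :
    XHom k c ∈ HKGroup (k + 1) Gs := by
  induction hc using Subgroup.closure_induction with
  | mem x hx =>
    obtain ⟨ω, g, hg, rfl⟩ := hx
    rw [show (fun σ => if ∀ i, ω i ≤ σ i then g else 1) = gen ω g from rfl, X_gen]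
    exact gen_mem _ (by rwa [cubeWeight_snoc, if_neg Bool.false_ne_true, add_zero])
  | one => rw [map_one]; exact one_mem _
  | mul x y hx hy ihx ihy => rw [map_mul]; exact mul_mem ihx ihy
  | inv x hx ihx => rw [map_inv]; exact inv_mem ihx

lemma U_mem {Gs : ℕ → Subgroup G} {u : (Fin k → Bool) → G}
    (hu : u ∈ HKGroup k fun n => Gs (n + 1)) : UHom k u ∈ HKGroup (k + 1) Gs := by
  induction hu using Subgroup.closure_induction with
  | mem x hx =>
    obtain ⟨ω, g, hg, rfl⟩ := hx
    rw [show (fun σ => if ∀ i, ω i ≤ σ i then g else 1) = gen ω g from rfl, U_gen]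
    exact gen_mem _ (by rwa [cubeWeight_snoc, if_pos rfl])
  | one => rw [map_one]; exact one_mem _
  | mul x y hx hy ihx ihy => rw [map_mul]; exact mul_mem ihx ihy
  | inv x hx ihx => rw [map_inv]; exact inv_mem ihx

lemma R_mem {Gs : ℕ → Subgroup G} (hanti : Antitone Gs) (i : Fin (k + 1)) (b : Bool)
    {c : (Fin (k + 1) → Bool) → G} (hc : c ∈ HKGroup (k + 1) Gs) :
    RHom i b c ∈ HKGroup k Gs := by
  induction hc using Subgroup.closure_induction with
  | mem x hx =>
    obtain ⟨ω, g, hg, rfl⟩ := hx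
    rw [show (fun σ => if ∀ i, ω i ≤ σ i then g else 1) = gen ω g from rfl, R_gen]
    split_ifs with h
    · exact gen_mem _ (hanti (cubeWeight_removeNth_le i ω) hg)
    · exact one_mem _
  | one => rw [map_one]; exact one_mem _
  | mul x y hx hy ihx ihy => rw [map_mul]; exact mul_mem ihx ihy
  | inv x hx ihx => rw [map_inv]; exact inv_mem ihx

lemma HK_mono {Gs Gs' : ℕ → Subgroup G} (h : ∀ n, Gs n ≤ Gs' n) :
    HKGroup k Gs ≤ HKGroup k Gs' := by
  apply Subgroup.closure_mono
  rintro x ⟨ω, g, hg, rfl⟩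
  exact ⟨ω, g, h _ hg, rfl⟩

lemma XU_conj (d u : (Fin k → Bool) → G) :
    XHom k d * UHom k u * (XHom k d)⁻¹ = UHom k (d * u * d⁻¹) := by
  funext σ
  by_cases h : σ (Fin.last k) = true <;>
    simp [UHom_apply, h, Pi.mul_apply, Pi.inv_apply]

lemma hk_conj {Gs : ℕ → Subgroup G} (hanti : Antitone Gs)
    (hcomm : ∀ i j, ⁅Gs i, Gs j⁆ ≤ Gs (i + j)) {d u : (Fin k → Bool) → G}
    (hd : d ∈ HKGroup k Gs) (hu : u ∈ HKGroup k fun n => Gs (n + 1)) :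
    d * u * d⁻¹ ∈ HKGroup k fun n => Gs (n + 1) := by
  have base : ∀ (τ : Fin k → Bool) (h : G), h ∈ Gs (cubeWeight τ) →
      ∀ u ∈ HKGroup k (fun n => Gs (n + 1)),
        gen τ h * u * (gen τ h)⁻¹ ∈ HKGroup k (fun n => Gs (n + 1)) := by
    intro τ h hh u hu
    induction hu using Subgroup.closure_induction with
    | mem x hx =>
      obtain ⟨ρ, g, hg, rfl⟩ := hx
      rw [show (fun σ => if ∀ i, ρ i ≤ σ i then g else 1) = gen ρ g from rfl, gen_conj]
      refine mul_mem (gen_mem _ ?_) (gen_mem _ hg)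
      have hcm : h * g * h⁻¹ * g⁻¹ ∈ Gs (cubeWeight τ + (cubeWeight ρ + 1)) := by
        have := Subgroup.commutator_mem_commutator hh hg
        rw [commutatorElement_def] at this
        exact hcomm _ _ this
      refine hanti ?_ hcm
      have := cubeWeight_sup_le ρ τ
      omega
    | one => simpa using one_mem _
    | mul x y hx hy ihx ihy =>
      have hxy : gen τ h * (x * y) * (gen τ h)⁻¹ =
          (gen τ h * x * (gen τ h)⁻¹) * (gen τ h * y * (gen τ h)⁻¹) := by group
      rw [hxy]; exact mul_mem ihx ihy
    | inv x hx ihx =>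
      have hxi : gen τ h * x⁻¹ * (gen τ h)⁻¹ = (gen τ h * x * (gen τ h)⁻¹)⁻¹ := by group
      rw [hxi]; exact inv_mem ihx
  suffices H : ∀ d ∈ HKGroup k Gs, ∀ u ∈ HKGroup k (fun n => Gs (n + 1)),
      d * u * d⁻¹ ∈ HKGroup k (fun n => Gs (n + 1)) ∧
      d⁻¹ * u * d ∈ HKGroup k (fun n => Gs (n + 1)) from (H d hd u hu).1
  intro d hd
  induction hd using Subgroup.closure_induction with
  | mem x hx =>
    obtain ⟨τ, h, hh, rfl⟩ := hx
    intro u hu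
    refine ⟨base τ h hh u hu, ?_⟩
    have h2 := base τ h⁻¹ (inv_mem hh) u hu
    rw [← gen_inv, inv_inv] at h2
    exact h2
  | one => intro u hu; constructor <;> simpa using hu
  | mul x y hx hy ihx ihy =>
    intro u hu
    constructor
    · have h1 : x * y * u * (x * y)⁻¹ = x * (y * u * y⁻¹) * x⁻¹ := by group
      rw [h1]; exact (ihx _ (ihy u hu).1).1
    · have h2 : (x * y)⁻¹ * u * (x * y) = y⁻¹ * (x⁻¹ * u * x) * y := by group
      rw [h2]; exact (ihy _ (ihx u hu).2).2
  | inv x hx ihx =>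
    intro u hu
    constructor
    · have h1 : x⁻¹ * u * (x⁻¹)⁻¹ = x⁻¹ * u * x := by group
      rw [h1]; exact (ihx u hu).2
    · have h2 : (x⁻¹)⁻¹ * u * x⁻¹ = x * u * x⁻¹ := by group
      rw [h2]; exact (ihx u hu).1

lemma hk_split {Gs : ℕ → Subgroup G} (hanti : Antitone Gs)
    (hcomm : ∀ i j, ⁅Gs i, Gs j⁆ ≤ Gs (i + j)) {c : (Fin (k + 1) → Bool) → G}
    (hc : c ∈ HKGroup (k + 1) Gs) :
    ∃ d ∈ HKGroup k Gs, ∃ u ∈ HKGroup k (fun n => Gs (n + 1)),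
      c = XHom k d * UHom k u := by
  induction hc using Subgroup.closure_induction with
  | mem x hx =>
    obtain ⟨ω, g, hg, rfl⟩ := hx
    rw [show (fun σ => if ∀ i, ω i ≤ σ i then g else 1) = gen ω g from rfl]
    by_cases hb : ω (Fin.last k) = true
    · have hω : Fin.snoc (Fin.init ω) true = ω := by rw [← hb]; exact Fin.snoc_init_self ω
      refine ⟨1, one_mem _, gen (Fin.init ω) g, gen_mem _ ?_, ?_⟩
      · have hcw : cubeWeight ω = cubeWeight (Fin.init ω) + 1 := by
          conv_lhs => rw [← hω]
          rw [cubeWeight_snoc, if_pos rfl]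
        rwa [← hcw]
      · rw [map_one, one_mul, U_gen, hω]
    · have hb' : ω (Fin.last k) = false := by
        cases hωl : ω (Fin.last k)
        · rfl
        · exact absurd hωl hb
      have hω : Fin.snoc (Fin.init ω) false = ω := by rw [← hb']; exact Fin.snoc_init_self ω
      refine ⟨gen (Fin.init ω) g, gen_mem _ ?_, 1, one_mem _, ?_⟩
      · have hcw : cubeWeight ω = cubeWeight (Fin.init ω) := by
          conv_lhs => rw [← hω]
          rw [cubeWeight_snoc]; simp
        rwa [← hcw]
      · rw [map_one, mul_one, X_gen, hω]
  | one => exact ⟨1, one_mem _, 1, one_mem _, by simp⟩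
  | mul x y hx hy ihx ihy =>
    obtain ⟨d₁, hd₁, u₁, hu₁, rfl⟩ := ihx
    obtain ⟨d₂, hd₂, u₂, hu₂, rfl⟩ := ihy
    have hcj : d₂⁻¹ * u₁ * d₂ ∈ HKGroup k (fun n => Gs (n + 1)) := by
      simpa using hk_conj hanti hcomm (inv_mem hd₂) hu₁
    refine ⟨d₁ * d₂, mul_mem hd₁ hd₂, (d₂⁻¹ * u₁ * d₂) * u₂, mul_mem hcj hu₂, ?_⟩
    have key : UHom k (d₂⁻¹ * u₁ * d₂) = (XHom k d₂)⁻¹ * UHom k u₁ * XHom k d₂ := by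
      have h1 := XU_conj (k := k) d₂⁻¹ u₁
      rw [inv_inv] at h1
      rw [← h1, map_inv, inv_inv]
    rw [map_mul, map_mul, key]
    group
  | inv x hx ihx =>
    obtain ⟨d, hd, u, hu, rfl⟩ := ihx
    refine ⟨d⁻¹, inv_mem hd, d * u⁻¹ * d⁻¹, hk_conj hanti hcomm hd (inv_mem hu), ?_⟩
    have key : UHom k (d * u⁻¹ * d⁻¹) = XHom k d * (UHom k u)⁻¹ * (XHom k d)⁻¹ := by
      rw [← XU_conj, map_inv]
    rw [key, map_inv]
    group

lemma insertNth_castSucc_snoc {n : ℕ} (j : Fin (n + 1)) (x : Bool) (ρ : Fin n → Bool)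
    (b : Bool) :
    ((j.castSucc).insertNth x (Fin.snoc ρ b) : Fin (n + 2) → Bool) =
      Fin.snoc (j.insertNth x ρ) b := by
  have hlast : (j.castSucc).succAbove (Fin.last n) = Fin.last (n + 1) := by
    rw [Fin.succAbove_of_le_castSucc _ _ (by
      simpa using Fin.le_last j), Fin.succ_last]
  funext l
  refine Fin.succAboveCases j.castSucc ?_ ?_ l
  · rw [Fin.insertNth_apply_same, Fin.snoc_castSucc, Fin.insertNth_apply_same]
  · intro t
    rw [Fin.insertNth_apply_succAbove]
    refine Fin.lastCases ?_ ?_ t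
    · rw [hlast, Fin.snoc_last, Fin.snoc_last]
    · intro s
      rw [Fin.castSucc_succAbove_castSucc, Fin.snoc_castSucc, Fin.snoc_castSucc,
        Fin.insertNth_apply_succAbove]

lemma snoc_top {n : ℕ} :
    (Fin.snoc (fun _ => true) true : Fin (n + 1) → Bool) = fun _ => true := by
  funext l
  refine Fin.lastCases ?_ ?_ l <;> simp

lemma key {G : Type*} [Group G] (Γ : Subgroup G) :
    ∀ (m : ℕ) (Gs : ℕ → Subgroup G), Antitone Gs → (∀ i j, ⁅Gs i, Gs j⁆ ≤ Gs (i + j)) →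
    ∀ gbar : (Fin (m + 1) → Bool) → G ⧸ Γ,
    (∀ i : Fin (m + 1), ∃ c ∈ HKGroup m Gs,
        ∀ τ : Fin m → Bool, gbar (i.insertNth false τ) = QuotientGroup.mk (c τ)) →
    ∃ c ∈ HKGroup (m + 1) Gs,
      ∀ ω, ω ≠ (fun _ => true) → gbar ω = QuotientGroup.mk (c ω) := by
  intro m
  induction m with
  | zero =>
    intro Gs hanti hcomm gbar hface
    obtain ⟨c, hc, hcv⟩ := hface 0
    refine ⟨XHom 0 c, X_mem hc, fun ω hω => ?_⟩
    have hω0 : ω 0 = false := by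
      cases h0 : ω 0
      · rfl
      · exact absurd (funext fun i => by rw [Fin.fin_one_eq_zero i, h0]) hω
    have hrw : ((0 : Fin 1).insertNth false (Fin.removeNth 0 ω) : Fin 1 → Bool) = ω := by
      rw [← hω0]; exact Fin.insertNth_self_removeNth 0 ω
    have h2 : XHom 0 c ω = c (Fin.removeNth 0 ω) := congrArg c (Subsingleton.elim _ _)
    rw [h2, ← hcv (Fin.removeNth 0 ω), hrw]
  | succ m ih =>
    intro Gs hanti hcomm gbar hface
    obtain ⟨c, hc, hcv⟩ := hface (Fin.last (m + 1))
    have hcv' : ∀ τ : Fin (m + 1) → Bool,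
        gbar (Fin.snoc τ false) = QuotientGroup.mk (c τ) := by
      intro τ; rw [← Fin.insertNth_last']; exact hcv τ
    have hcheq : XHom (m + 1) c ∈ HKGroup (m + 2) Gs := X_mem hc
    set gl : (Fin (m + 2) → Bool) → G := fun ω => (gbar ω).out with hgl
    have hglmk : ∀ ω, QuotientGroup.mk (gl ω) = gbar ω := fun ω => QuotientGroup.out_eq' _
    set lam : (Fin (m + 1) → Bool) → G ⧸ Γ := fun τ =>
      QuotientGroup.mk ((XHom (m + 1) c (Fin.snoc τ true))⁻¹ * gl (Fin.snoc τ true))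
      with hlamdef
    have hfaces : ∀ j : Fin (m + 1), ∃ w ∈ HKGroup m (fun n => Gs (n + 1)),
        ∀ ρ : Fin m → Bool, lam (j.insertNth false ρ) = QuotientGroup.mk (w ρ) := by
      intro j
      obtain ⟨cj, hcj, hcjv⟩ := hface j.castSucc
      have haHK : (RHom j.castSucc false (XHom (m + 1) c))⁻¹ * cj ∈ HKGroup (m + 1) Gs :=
        mul_mem (inv_mem (R_mem hanti _ _ hcheq)) hcj
      obtain ⟨d, hd, u, hu, hsplit⟩ := hk_split hanti hcomm haHK
      have haval : ∀ τ : Fin (m + 1) → Bool,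
          ((RHom j.castSucc false (XHom (m + 1) c))⁻¹ * cj) τ =
            (XHom (m + 1) c (j.castSucc.insertNth false τ))⁻¹ * cj τ := fun τ => rfl
      have hdΓ : ∀ ρ : Fin m → Bool, d ρ ∈ Γ := by
        intro ρ
        have h1 : ((RHom j.castSucc false (XHom (m + 1) c))⁻¹ * cj) (Fin.snoc ρ false)
            = d ρ := by
          rw [hsplit, Pi.mul_apply, XHom_apply_snoc, UHom_apply_snoc_false, mul_one]
        have hσ : (j.castSucc.insertNth false (Fin.snoc ρ false) : Fin (m + 2) → Bool)
            = Fin.snoc (j.insertNth false ρ) false := insertNth_castSucc_snoc j false ρ false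
        have e3 : QuotientGroup.mk (c (j.insertNth false ρ)) =
            (QuotientGroup.mk (cj (Fin.snoc ρ false)) : G ⧸ Γ) := by
          rw [← hcv' (j.insertNth false ρ), ← hσ]
          exact hcjv _
        have e4 : (c (j.insertNth false ρ))⁻¹ * cj (Fin.snoc ρ false) ∈ Γ :=
          QuotientGroup.eq.mp e3
        rw [← h1, haval, hσ, XHom_apply_snoc]
        exact e4
      refine ⟨d * u * d⁻¹, hk_conj hanti hcomm hd hu, ?_⟩
      intro ρ
      have hσ' : (j.castSucc.insertNth false (Fin.snoc ρ true) : Fin (m + 2) → Bool)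
          = Fin.snoc (j.insertNth false ρ) true := insertNth_castSucc_snoc j false ρ true
      have e5 : gbar (Fin.snoc (j.insertNth false ρ) true)
          = QuotientGroup.mk (cj (Fin.snoc ρ true)) := by
        rw [← hσ']; exact hcjv _
      have hγ : (cj (Fin.snoc ρ true))⁻¹ * gl (Fin.snoc (j.insertNth false ρ) true) ∈ Γ :=
        QuotientGroup.eq.mp (e5.symm.trans (hglmk _).symm)
      have hglT : gl (Fin.snoc (j.insertNth false ρ) true) = cj (Fin.snoc ρ true) *
          ((cj (Fin.snoc ρ true))⁻¹ * gl (Fin.snoc (j.insertNth false ρ) true)) := by group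
      have haT : ((RHom j.castSucc false (XHom (m + 1) c))⁻¹ * cj) (Fin.snoc ρ true)
          = d ρ * u ρ := by
        rw [hsplit, Pi.mul_apply, XHom_apply_snoc, UHom_apply_snoc_true]
      have ha2 : (XHom (m + 1) c (Fin.snoc (j.insertNth false ρ) true))⁻¹ *
          cj (Fin.snoc ρ true) = d ρ * u ρ := by
        rw [← haT, haval, hσ']
      have hlameq : lam (j.insertNth false ρ) = QuotientGroup.mk
          ((XHom (m + 1) c (Fin.snoc (j.insertNth false ρ) true))⁻¹ *
            gl (Fin.snoc (j.insertNth false ρ) true)) := rfl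
      rw [hlameq]
      have hfinal : (XHom (m + 1) c (Fin.snoc (j.insertNth false ρ) true))⁻¹ *
          gl (Fin.snoc (j.insertNth false ρ) true) =
          (d * u * d⁻¹) ρ * (d ρ * ((cj (Fin.snoc ρ true))⁻¹ *
            gl (Fin.snoc (j.insertNth false ρ) true))) := by
        rw [hglT, ← mul_assoc, ha2]
        simp only [Pi.mul_apply, Pi.inv_apply]
        group
      rw [hfinal, QuotientGroup.mk_mul_of_mem _ (mul_mem (hdΓ ρ) hγ)]
    obtain ⟨w, hw, hwv⟩ := ih (fun n => Gs (n + 1))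
      (fun i j hij => hanti (by omega))
      (fun i j => le_trans (hcomm (i + 1) (j + 1)) (hanti (by omega)))
      lam hfaces
    refine ⟨XHom (m + 1) c * UHom (m + 1) w, mul_mem hcheq (U_mem hw), ?_⟩
    intro ω hω
    by_cases hl : ω (Fin.last (m + 1)) = true
    · have hωsnoc : Fin.snoc (Fin.init ω) true = ω := by
        rw [← hl]; exact Fin.snoc_init_self ω
      have hτtop : Fin.init ω ≠ (fun _ => true) := by
        intro hcontra; apply hω; rw [← hωsnoc, hcontra]; exact snoc_top
      have hlam2 : QuotientGroup.mk ((XHom (m + 1) c ω)⁻¹ * gl ω)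
          = (QuotientGroup.mk (w (Fin.init ω)) : G ⧸ Γ) := by
        have h0 : lam (Fin.init ω) = QuotientGroup.mk
            ((XHom (m + 1) c (Fin.snoc (Fin.init ω) true))⁻¹ *
              gl (Fin.snoc (Fin.init ω) true)) := rfl
        rw [← hwv (Fin.init ω) hτtop, h0, hωsnoc]
      have hγ : ((XHom (m + 1) c ω)⁻¹ * gl ω)⁻¹ * w (Fin.init ω) ∈ Γ :=
        QuotientGroup.eq.mp hlam2
      have hUω : (XHom (m + 1) c * UHom (m + 1) w) ω
          = XHom (m + 1) c ω * w (Fin.init ω) := by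
        rw [Pi.mul_apply, ← hωsnoc, UHom_apply_snoc_true, XHom_apply_snoc, Fin.init_snoc]
      rw [hUω]
      have hwval : XHom (m + 1) c ω * w (Fin.init ω) =
          gl ω * (((XHom (m + 1) c ω)⁻¹ * gl ω)⁻¹ * w (Fin.init ω)) := by group
      rw [hwval, QuotientGroup.mk_mul_of_mem _ hγ, hglmk]
    · have hl' : ω (Fin.last (m + 1)) = false := by
        cases h : ω (Fin.last (m + 1))
        · rfl
        · exact absurd h hl
      have hωsnoc : Fin.snoc (Fin.init ω) false = ω := by
        rw [← hl']; exact Fin.snoc_init_self ω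
      have hval : (XHom (m + 1) c * UHom (m + 1) w) ω = c (Fin.init ω) := by
        rw [Pi.mul_apply, ← hωsnoc, UHom_apply_snoc_false, XHom_apply_snoc, Fin.init_snoc,
          mul_one]
      rw [hval, ← hcv' (Fin.init ω), hωsnoc]

end S7

variable {E : Type*} [NormedAddCommGroup E] [NormedSpace ℝ E] [FiniteDimensional ℝ E]
  {G : Type*} [TopologicalSpace G] [ChartedSpace E G] [Group G] [IsTopologicalGroup G]
  [LieGroup (modelWithCornersSelf ℝ E) (⊤ : ℕ∞) G] [Group.IsNilpotent G]

/-- **corner completion.** Let `G_•` be a `Γ`-rational filtration of length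
`d` as above, and let `k = m + 1 ≥ 1`. Suppose `(ḡ_ω)_{ω ≠ 1^k}` is a partial cube in
`G/Γ` whose restriction to each codimension-one face `{ω : ω_i = 0}` (identified with
`{0,1}^{k-1}` via `Fin.insertNth`) lies in the image of `HK^{k-1}(G_•)` in
`(G/Γ)^{{0,1}^{k-1}}`. Then there is a value `ḡ_{1^k}` completing it to a cube lying in
the image of `HK^k(G_•)` in `(G/Γ)^{{0,1}^k}`. -/
theorem statement7
    (d : ℕ) (Gs : ℕ → Subgroup G)
    (hanti : Antitone Gs) (hclosed : ∀ i, IsClosed (Gs i : Set G))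
    (hcomm : ∀ i j, ⁅Gs i, Gs j⁆ ≤ Gs (i + j))
    (hfil0 : Gs 0 = ⊤) (hfil1 : Gs 1 = ⊤) (hlen : Gs (d + 1) = ⊥)
    (Γ : Subgroup G) [DiscreteTopology Γ] (hcocompact : CompactSpace (G ⧸ Γ))
    (hrat : ∀ i, CompactSpace (↥(Gs i) ⧸ Γ.subgroupOf (Gs i)))
    (m : ℕ) (gbar : (Fin (m + 1) → Bool) → G ⧸ Γ)
    (hface : ∀ i : Fin (m + 1), ∃ c ∈ HKGroup m Gs,
      ∀ τ : Fin m → Bool, gbar (i.insertNth false τ) = QuotientGroup.mk (c τ)) :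
    ∃ gtop : G ⧸ Γ, ∃ c ∈ HKGroup (m + 1) Gs,
      ∀ ω : Fin (m + 1) → Bool,
        Function.update gbar (fun _ => true) gtop ω = QuotientGroup.mk (c ω) := by
  obtain ⟨c, hc, hcv⟩ := S7.key Γ m Gs hanti hcomm gbar hface
  refine ⟨QuotientGroup.mk (c (fun _ => true)), c, hc, ?_⟩
  intro ω
  by_cases hω : ω = (fun _ => true)
  · rw [hω, Function.update_self]
  · rw [Function.update_of_ne hω]
    exact hcv ω hω
end

section
/- Let G_• be a filtration of length d on a nilpotent finite-dimensional real Lie group G, and let Γ ≤ G be a discrete subgroup with G/Γ compact such that G_• is Γ-rational. Suppose (g_ω)_{ω ∈ {0,1}^{d+1}} ∈ HK^{d+1}(G_•) is such that g_ω ∈ Γ for every ω ≠ 1^{d+1}. Then also g_{1^{d+1}} ∈ Γ. -/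
section Aux
variable {H : Type*} [Group H]

def faceEl {k : ℕ} (ω : Fin k → Bool) (g : H) : (Fin k → Bool) → H :=
  fun σ => if ∀ i, ω i ≤ σ i then g else 1

lemma faceEl_inv {k : ℕ} (ω : Fin k → Bool) (g : H) : (faceEl ω g)⁻¹ = faceEl ω g⁻¹ := by
  funext σ
  by_cases h : ∀ i, ω i ≤ σ i <;> simp [faceEl, h]

lemma cubeWeight_or_le {k : ℕ} (ω τ : Fin k → Bool) :
    cubeWeight (fun i => ω i || τ i) ≤ cubeWeight ω + cubeWeight τ := by
  unfold cubeWeight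
  have : (Finset.univ.filter fun i => (ω i || τ i) = true) =
      (Finset.univ.filter fun i => ω i = true) ∪ (Finset.univ.filter fun i => τ i = true) := by
    rw [← Finset.filter_or]
    simp [Bool.or_eq_true]
  rw [this]
  exact Finset.card_union_le _ _

lemma face_commutator {k : ℕ} (ω τ : Fin k → Bool) (g h : H) :
    faceEl ω g * faceEl τ h * (faceEl ω g)⁻¹ * (faceEl τ h)⁻¹ =
      faceEl (fun i => ω i || τ i) (g * h * g⁻¹ * h⁻¹) := by
  have hor : ∀ σ : Fin k → Bool,
      (∀ i, (ω i || τ i) ≤ σ i) ↔ (∀ i, ω i ≤ σ i) ∧ (∀ i, τ i ≤ σ i) := by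
    intro σ
    have hb : ∀ a b c : Bool, ((a || b) ≤ c ↔ a ≤ c ∧ b ≤ c) := by decide
    simp only [hb, forall_and]
  funext σ
  simp only [faceEl, Pi.mul_apply, Pi.inv_apply, hor]
  by_cases h1 : ∀ i, ω i ≤ σ i <;> by_cases h2 : ∀ i, τ i ≤ σ i <;>
    simp [h1, h2]

lemma cubeWeight_succ {k : ℕ} (ω : Fin (k + 1) → Bool) :
    cubeWeight ω = (if ω 0 = true then 1 else 0) + cubeWeight (Fin.tail ω) := by
  unfold cubeWeight
  rw [Finset.card_filter, Finset.card_filter, Fin.sum_univ_succ]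
  rfl

end Aux

section Conj
variable {H : Type*} [Group H] {k : ℕ} {Gs : ℕ → Subgroup H}

lemma conj_faceEl (hanti : Antitone Gs) (hcomm : ∀ i j, ⁅Gs i, Gs j⁆ ≤ Gs (i + j))
    {ω : Fin k → Bool} {g : H} (hg : g ∈ Gs (cubeWeight ω)) :
    ∀ h ∈ HKGroup k (fun i => Gs (i + 1)),
      faceEl ω g * h * (faceEl ω g)⁻¹ ∈ HKGroup k (fun i => Gs (i + 1)) := by
  intro h hh
  induction hh using Subgroup.closure_induction with
  | mem y hy =>
    obtain ⟨τ, h₀, hh₀, rfl⟩ := hy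
    have hmem : g * h₀ * g⁻¹ * h₀⁻¹ ∈ Gs (cubeWeight (fun i => ω i || τ i) + 1) := by
      have h1 : g * h₀ * g⁻¹ * h₀⁻¹ ∈ ⁅Gs (cubeWeight ω), Gs (cubeWeight τ + 1)⁆ :=
        Subgroup.commutator_mem_commutator hg hh₀
      have h2 := hcomm _ _ h1
      have h3 : cubeWeight (fun i => ω i || τ i) + 1 ≤ cubeWeight ω + (cubeWeight τ + 1) := by
        have := cubeWeight_or_le ω τ; omega
      have := hanti h3 h2
      simpa [commutatorElement_def] using this
    have key : faceEl ω g * faceEl τ h₀ * (faceEl ω g)⁻¹ =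
        faceEl (fun i => ω i || τ i) (g * h₀ * g⁻¹ * h₀⁻¹) * faceEl τ h₀ := by
      rw [← face_commutator]; group
    show faceEl ω g * faceEl τ h₀ * (faceEl ω g)⁻¹ ∈ _
    rw [key]
    exact mul_mem (Subgroup.subset_closure ⟨_, _, hmem, rfl⟩)
      (Subgroup.subset_closure ⟨τ, h₀, hh₀, rfl⟩)
  | one => simpa using one_mem _
  | mul x y hx hy px py =>
    have : faceEl ω g * (x * y) * (faceEl ω g)⁻¹ =
        (faceEl ω g * x * (faceEl ω g)⁻¹) * (faceEl ω g * y * (faceEl ω g)⁻¹) := by group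
    rw [this]; exact mul_mem px py
  | inv x hx px =>
    have : faceEl ω g * x⁻¹ * (faceEl ω g)⁻¹ = (faceEl ω g * x * (faceEl ω g)⁻¹)⁻¹ := by group
    rw [this]; exact inv_mem px

lemma conj_mem (hanti : Antitone Gs) (hcomm : ∀ i j, ⁅Gs i, Gs j⁆ ≤ Gs (i + j))
    {a : (Fin k → Bool) → H} (ha : a ∈ HKGroup k Gs) {h : (Fin k → Bool) → H}
    (hh : h ∈ HKGroup k (fun i => Gs (i + 1))) :
    a * h * a⁻¹ ∈ HKGroup k (fun i => Gs (i + 1)) := by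
  set N := HKGroup k (fun i => Gs (i + 1)) with hN
  suffices hsuf : (∀ h ∈ N, a * h * a⁻¹ ∈ N) ∧ (∀ h ∈ N, a⁻¹ * h * a ∈ N) from hsuf.1 h hh
  clear hh h
  induction ha using Subgroup.closure_induction with
  | mem x hx =>
    obtain ⟨ω, g, hg, rfl⟩ := hx
    constructor
    · exact conj_faceEl hanti hcomm hg
    · intro h hh
      have hg' : g⁻¹ ∈ Gs (cubeWeight ω) := inv_mem hg
      have := conj_faceEl hanti hcomm hg' h hh
      show (faceEl ω g)⁻¹ * h * faceEl ω g ∈ N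
      rw [faceEl_inv]
      have h2 : faceEl ω g = (faceEl ω g⁻¹)⁻¹ := by rw [faceEl_inv, inv_inv]
      rw [h2]
      exact this
  | one => constructor <;> intro h hh <;> simpa using hh
  | mul x y hx hy px py =>
    constructor
    · intro h hh
      have : x * y * h * (x * y)⁻¹ = x * (y * h * y⁻¹) * x⁻¹ := by group
      rw [this]; exact px.1 _ (py.1 h hh)
    · intro h hh
      have : (x * y)⁻¹ * h * (x * y) = y⁻¹ * (x⁻¹ * h * x) * y := by group
      rw [this]; exact py.2 _ (px.2 h hh)
  | inv x hx px =>
    refine ⟨fun h hh => by rw [inv_inv]; exact px.2 h hh, fun h hh => ?_⟩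
    have : x⁻¹⁻¹ * h * x⁻¹ = x * h * x⁻¹ := by group
    rw [this]; exact px.1 h hh

end Conj

section Decomp
variable {H : Type*} [Group H] {k : ℕ} {Gs : ℕ → Subgroup H}

lemma hk_decomp (hanti : Antitone Gs) (hcomm : ∀ i j, ⁅Gs i, Gs j⁆ ≤ Gs (i + j))
    {c : (Fin (k + 1) → Bool) → H} (hc : c ∈ HKGroup (k + 1) Gs) :
    (fun ω => c (Fin.cons false ω)) ∈ HKGroup k Gs ∧
    (fun ω => (c (Fin.cons false ω))⁻¹ * c (Fin.cons true ω)) ∈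
      HKGroup k (fun i => Gs (i + 1)) := by
  induction hc using Subgroup.closure_induction with
  | mem x hx =>
    obtain ⟨ω, g, hg, rfl⟩ := hx
    have hcond : ∀ (b : Bool) (σ' : Fin k → Bool),
        (∀ i, ω i ≤ (Fin.cons b σ' : Fin (k+1) → Bool) i) ↔ (ω 0 ≤ b ∧ ∀ i, Fin.tail ω i ≤ σ' i) := by
      intro b σ'
      rw [Fin.forall_fin_succ]
      simp [Fin.tail, Fin.cons_zero, Fin.cons_succ]
    cases hb : ω 0 with
    | false =>
      have hw : cubeWeight ω = cubeWeight (Fin.tail ω) := by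
        rw [cubeWeight_succ ω, hb]; simp
      have hlow : (fun σ' => (fun σ => if ∀ i, ω i ≤ σ i then g else 1) (Fin.cons false σ'))
          = faceEl (Fin.tail ω) g := by
        funext σ'
        simp only [faceEl, hcond, hb]
        simp
      have hup : (fun σ' => (fun σ => if ∀ i, ω i ≤ σ i then g else 1) (Fin.cons true σ'))
          = faceEl (Fin.tail ω) g := by
        funext σ'
        simp only [faceEl, hcond, hb]
        simp
      constructor
      · rw [hlow]
        exact Subgroup.subset_closure ⟨Fin.tail ω, g, hw ▸ hg, rfl⟩
      · have : (fun σ' => ((fun σ => if ∀ i, ω i ≤ σ i then g else 1) (Fin.cons false σ'))⁻¹ *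
            (fun σ => if ∀ i, ω i ≤ σ i then g else 1) (Fin.cons true σ')) = 1 := by
          funext σ'
          have h1 := congrFun hlow σ'
          have h2 := congrFun hup σ'
          beta_reduce at h1 h2 ⊢
          rw [h1, h2]
          simp
        rw [this]; exact one_mem _
    | true =>
      have hw : cubeWeight ω = cubeWeight (Fin.tail ω) + 1 := by
        rw [cubeWeight_succ ω, hb]; simp; omega
      have hlow : (fun σ' => (fun σ => if ∀ i, ω i ≤ σ i then g else 1) (Fin.cons false σ'))
          = (1 : (Fin k → Bool) → H) := by
        funext σ'
        simp only [hcond, hb]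
        simp
      have hup : (fun σ' => (fun σ => if ∀ i, ω i ≤ σ i then g else 1) (Fin.cons true σ'))
          = faceEl (Fin.tail ω) g := by
        funext σ'
        simp only [faceEl, hcond, hb]
        simp
      constructor
      · rw [hlow]; exact one_mem _
      · have : (fun σ' => ((fun σ => if ∀ i, ω i ≤ σ i then g else 1) (Fin.cons false σ'))⁻¹ *
            (fun σ => if ∀ i, ω i ≤ σ i then g else 1) (Fin.cons true σ')) =
            faceEl (Fin.tail ω) g := by
          funext σ'
          have h1 := congrFun hlow σ'
          have h2 := congrFun hup σ'
          beta_reduce at h1 h2 ⊢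
          rw [h1, h2]
          simp
        rw [this]
        refine Subgroup.subset_closure ⟨Fin.tail ω, g, ?_, rfl⟩
        show g ∈ Gs (cubeWeight (Fin.tail ω) + 1)
        rw [← hw]; exact hg
  | one =>
    constructor
    · have : (fun ω => (1 : (Fin (k+1) → Bool) → H) (Fin.cons false ω)) =
          (1 : (Fin k → Bool) → H) := rfl
      rw [this]; exact one_mem _
    · have : (fun ω => ((1 : (Fin (k+1) → Bool) → H) (Fin.cons false ω))⁻¹ *
          (1 : (Fin (k+1) → Bool) → H) (Fin.cons true ω)) = (1 : (Fin k → Bool) → H) := by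
        funext σ'; simp
      rw [this]; exact one_mem _
  | mul x y hx hy px py =>
    constructor
    · have : (fun ω => (x * y) (Fin.cons false ω)) =
          (fun ω => x (Fin.cons false ω)) * (fun ω => y (Fin.cons false ω)) := rfl
      rw [this]; exact mul_mem px.1 py.1
    · have : (fun ω => ((x * y) (Fin.cons false ω))⁻¹ * (x * y) (Fin.cons true ω)) =
          ((fun ω => y (Fin.cons false ω))⁻¹ *
            (fun ω => (x (Fin.cons false ω))⁻¹ * x (Fin.cons true ω)) *
            ((fun ω => y (Fin.cons false ω))⁻¹)⁻¹) *
          (fun ω => (y (Fin.cons false ω))⁻¹ * y (Fin.cons true ω)) := by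
        funext σ'
        simp only [Pi.mul_apply, Pi.inv_apply]
        group
      rw [this]
      exact mul_mem (conj_mem hanti hcomm (inv_mem py.1) px.2) py.2
  | inv x hx px =>
    constructor
    · have : (fun ω => x⁻¹ (Fin.cons false ω)) = (fun ω => x (Fin.cons false ω))⁻¹ := rfl
      rw [this]; exact inv_mem px.1
    · have : (fun ω => (x⁻¹ (Fin.cons false ω))⁻¹ * x⁻¹ (Fin.cons true ω)) =
          (fun ω => x (Fin.cons false ω)) *
            (fun ω => (x (Fin.cons false ω))⁻¹ * x (Fin.cons true ω))⁻¹ *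
            (fun ω => x (Fin.cons false ω))⁻¹ := by
        funext σ'
        simp only [Pi.mul_apply, Pi.inv_apply]
        group
      rw [this]
      exact conj_mem hanti hcomm px.1 (inv_mem px.2)

end Decomp

section Key
variable {H : Type*} [Group H]

lemma hk_corner : ∀ (k : ℕ) (Gs : ℕ → Subgroup H), Antitone Gs →
    (∀ i j, ⁅Gs i, Gs j⁆ ≤ Gs (i + j)) → Gs k = ⊥ → ∀ (Γ : Subgroup H)
    (c : (Fin k → Bool) → H), c ∈ HKGroup k Gs →
    (∀ ω, ω ≠ (fun _ => true) → c ω ∈ Γ) → c (fun _ => true) ∈ Γ := by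
  intro k
  induction k with
  | zero =>
    intro Gs hanti hcomm hbot Γ c hc hΓ
    have hle : HKGroup 0 Gs ≤ ⊥ := by
      rw [HKGroup, Subgroup.closure_le]
      rintro x ⟨ω, g, hg, rfl⟩
      have hω : cubeWeight ω = 0 := by simp [cubeWeight]
      rw [hω, hbot, Subgroup.mem_bot] at hg
      subst hg
      simp only [SetLike.mem_coe, Subgroup.mem_bot]
      funext σ
      simp
    have hc1 : c = 1 := by simpa [Subgroup.mem_bot] using hle hc
    rw [hc1]
    exact one_mem Γ
  | succ k ih =>
    intro Gs hanti hcomm hbot Γ c hc hΓ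
    obtain ⟨ha, hh⟩ := hk_decomp hanti hcomm hc
    have haΓ : ∀ ω : Fin k → Bool, c (Fin.cons false ω) ∈ Γ := by
      intro ω
      refine hΓ _ ?_
      intro hcon
      have := congrFun hcon 0
      simp [Fin.cons_zero] at this
    have hhΓ : ∀ ω : Fin k → Bool, ω ≠ (fun _ => true) →
        (c (Fin.cons false ω))⁻¹ * c (Fin.cons true ω) ∈ Γ := by
      intro ω hω
      refine mul_mem (inv_mem (haΓ ω)) (hΓ _ ?_)
      intro hcon
      apply hω
      funext i
      have := congrFun hcon i.succ
      simpa [Fin.cons_succ] using this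
    have h1 := ih (fun i => Gs (i + 1)) (fun i j hij => hanti (by omega))
      (fun i j => le_trans (hcomm (i + 1) (j + 1)) (hanti (by omega))) hbot Γ _ hh hhΓ
    have h2 : c (Fin.cons true (fun _ => true)) ∈ Γ := by
      have := mul_mem (haΓ (fun _ => true)) h1
      simpa [mul_inv_cancel_left] using this
    have hall : (fun _ : Fin (k + 1) => true) = Fin.cons true (fun _ => true) := by
      funext i
      refine Fin.cases ?_ ?_ i <;> simp [Fin.cons_zero, Fin.cons_succ]
    rw [hall]
    exact h2

end Key

variable {E : Type*} [NormedAddCommGroup E] [NormedSpace ℝ E] [FiniteDimensional ℝ E]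
  {G : Type*} [TopologicalSpace G] [ChartedSpace E G] [Group G] [IsTopologicalGroup G]
  [LieGroup (modelWithCornersSelf ℝ E) (⊤ : ℕ∞) G] [Group.IsNilpotent G]

/-- Let `G_•` be a `Γ`-rational filtration of length `d` as above. If
`(g_ω)_{ω ∈ {0,1}^{d+1}} ∈ HK^{d+1}(G_•)` satisfies `g_ω ∈ Γ` for every `ω ≠ 1^{d+1}`,
then also `g_{1^{d+1}} ∈ Γ`. -/
theorem statement8
    (d : ℕ) (Gs : ℕ → Subgroup G)
    (hanti : Antitone Gs) (hclosed : ∀ i, IsClosed (Gs i : Set G))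
    (hcomm : ∀ i j, ⁅Gs i, Gs j⁆ ≤ Gs (i + j))
    (hfil0 : Gs 0 = ⊤) (hfil1 : Gs 1 = ⊤) (hlen : Gs (d + 1) = ⊥)
    (Γ : Subgroup G) [DiscreteTopology Γ] (hcocompact : CompactSpace (G ⧸ Γ))
    (hrat : ∀ i, CompactSpace (↥(Gs i) ⧸ Γ.subgroupOf (Gs i)))
    (c : (Fin (d + 1) → Bool) → G) (hc : c ∈ HKGroup (d + 1) Gs)
    (hΓ : ∀ ω : Fin (d + 1) → Bool, ω ≠ (fun _ => true) → c ω ∈ Γ) :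
    c (fun _ => true) ∈ Γ :=
  hk_corner (d + 1) Gs hanti hcomm hlen Γ c hc hΓ
end
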